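/- Let S ⊆ k⟨X⟩ with each s ∈ S monic and < a monomial well order on X*. If Irr(S) = {u ∈ X* : u ≠ a s̄ b for all s ∈ S, a,b ∈ X*} is a linear basis of k⟨X⟩/Id(S), then every nonzero f ∈ Id(S) has leading word of the form a s̄ b for some s ∈ S and a,b ∈ X*. -/

import Mathlib

/-- `w` is the leading word of `f`: it occurs in `f` and dominates every word
occurring in `f`. -/
def IsLead {k X : Type*} [Field k] [LinearOrder (FreeMonoid X)]
    (f : MonoidAlgebra k (FreeMonoid X)) (w : FreeMonoid X) : Prop :=
  w ∈ f.coeff.support ∧ ∀ u ∈ f.coeff.support, u ≤ w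

/-- The two-sided ideal `Id(S)` of `k⟨X⟩` generated by `S`, as the span of
all elements `a·s·b` with `a, b` monomials. -/
noncomputable def IdS (k : Type*) {X : Type*} [Field k]
    (S : Set (MonoidAlgebra k (FreeMonoid X))) :
    Submodule k (MonoidAlgebra k (FreeMonoid X)) :=
  Submodule.span k {p | ∃ s ∈ S, ∃ a b : FreeMonoid X,
    p = (MonoidAlgebra.of k (FreeMonoid X) a) * s * (MonoidAlgebra.of k (FreeMonoid X) b)}

/-- The set `Irr(S)` of words containing no leading word of `S` as a subword. -/
def IrrS {k X : Type*} [Field k] [LinearOrder (FreeMonoid X)]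
    (S : Set (MonoidAlgebra k (FreeMonoid X))) : Set (FreeMonoid X) :=
  {u | ∀ s ∈ S, ∀ w a b : FreeMonoid X, IsLead s w → u ≠ a * w * b}

/-- (iii) ⟹ (ii) in the Composition-Diamond lemma: if `Irr(S)` is a linear
basis of `k⟨X⟩/Id(S)`, then every nonzero `f ∈ Id(S)` has leading word of
the form `a s̄ b` for some `s ∈ S` and words `a, b`. -/
theorem CD_lemma_iii_implies_ii {k X : Type*} [Field k] [LinearOrder (FreeMonoid X)]
    (hwf : WellFoundedLT (FreeMonoid X))
    (hmono : ∀ u v w₁ w₂ : FreeMonoid X, u < v → w₁ * u * w₂ < w₁ * v * w₂)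
    (S : Set (MonoidAlgebra k (FreeMonoid X)))
    (hmonic : ∀ s ∈ S, ∃ w : FreeMonoid X, IsLead s w ∧ s.coeff w = 1)
    (hbasis : LinearIndependent k (fun u : IrrS S =>
        Submodule.Quotient.mk (p := IdS k S)
          (MonoidAlgebra.of k (FreeMonoid X) (u : FreeMonoid X))) ∧
      Submodule.span k (Set.range (fun u : IrrS S =>
        Submodule.Quotient.mk (p := IdS k S)
          (MonoidAlgebra.of k (FreeMonoid X) (u : FreeMonoid X)))) = ⊤) :
    ∀ f ∈ IdS k S, f ≠ 0 →
      ∃ s ∈ S, ∃ w a b : FreeMonoid X, IsLead s w ∧ IsLead f (a * w * b) := by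
  classical
  obtain ⟨hli, -⟩ := hbasis
  haveI := hwf
  -- injectivity of u ↦ a * u * b
  have hinj : ∀ (a b u v : FreeMonoid X), a * u * b = a * v * b → u = v := by
    intro a b u v h
    rcases lt_trichotomy u v with hlt | rfl | hlt
    · exact absurd h (ne_of_lt (hmono u v a b hlt))
    · rfl
    · exact absurd h.symm (ne_of_lt (hmono v u a b hlt))
  have maxlt : ∀ (f : MonoidAlgebra k (FreeMonoid X)) (w : FreeMonoid X),
      (∀ u ∈ f.coeff.support, u < w) → f.coeff.support.max < (w : WithBot (FreeMonoid X)) := by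
    intro f w h
    rcases f.coeff.support.eq_empty_or_nonempty with he | hs
    · simp [he]
    · rw [← Finset.coe_max' hs]
      exact WithBot.coe_lt_coe.2 (h _ (f.coeff.support.max'_mem hs))
  -- reduction lemma
  have L : ∀ m : WithBot (FreeMonoid X), ∀ f : MonoidAlgebra k (FreeMonoid X),
      f.coeff.support.max = m →
      ∃ r : MonoidAlgebra k (FreeMonoid X), f - r ∈ IdS k S ∧
        (∀ u ∈ r.coeff.support, u ∈ IrrS S) ∧
        (∀ u ∈ r.coeff.support, (u : WithBot (FreeMonoid X)) ≤ m) := by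
    intro m
    refine IsWellFounded.induction (α := WithBot (FreeMonoid X)) (· < ·)
      (motive := fun m => ∀ f : MonoidAlgebra k (FreeMonoid X), f.coeff.support.max = m →
        ∃ r : MonoidAlgebra k (FreeMonoid X), f - r ∈ IdS k S ∧
          (∀ u ∈ r.coeff.support, u ∈ IrrS S) ∧
          (∀ u ∈ r.coeff.support, (u : WithBot (FreeMonoid X)) ≤ m)) m ?_
    intro m ih f hm
    by_cases hf0 : f = 0
    · exact ⟨0, by simp [hf0, Submodule.zero_mem], by simp, by simp⟩
    have hne : f.coeff.support.Nonempty := Finsupp.support_nonempty_iff.2 (mt MonoidAlgebra.coeff_eq_zero.1 hf0)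
    set w₀ := f.coeff.support.max' hne with hw₀def
    have hm' : m = ↑w₀ := by rw [← hm, Finset.coe_max']
    have hw₀ : w₀ ∈ f.coeff.support := f.coeff.support.max'_mem hne
    have hmax : ∀ u ∈ f.coeff.support, u ≤ w₀ := fun u hu => f.coeff.support.le_max' u hu
    by_cases hirr : w₀ ∈ IrrS S
    · -- leading word irreducible: move it to the remainder
      set f' := f - MonoidAlgebra.single w₀ (f.coeff w₀) with hf'def
      have hf'w₀ : f'.coeff w₀ = 0 := by
        rw [hf'def, MonoidAlgebra.coeff_sub, Finsupp.sub_apply, MonoidAlgebra.coeff_single, Finsupp.single_eq_same, sub_self]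
      have hfs' : ∀ u ∈ f'.coeff.support, u < w₀ := by
        intro u hu
        have hune : u ≠ w₀ := by
          intro h; rw [h] at hu; exact (Finsupp.mem_support_iff.1 hu) hf'w₀
        rcases Finset.mem_union.1 (Finsupp.support_sub (f := f.coeff) hu) with h | h
        · exact lt_of_le_of_ne (hmax u h) hune
        · exact absurd (Finset.mem_singleton.1 (Finsupp.support_single_subset h)) hune
      have hlt : f'.coeff.support.max < m := hm' ▸ maxlt f' w₀ hfs'
      obtain ⟨r', h1, h2, h3⟩ := ih _ hlt f' rfl
      refine ⟨r' + MonoidAlgebra.single w₀ (f.coeff w₀), ?_, ?_, ?_⟩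
      · have heq : f - (r' + MonoidAlgebra.single w₀ (f.coeff w₀)) = f' - r' := by
          rw [hf'def]; abel
        rw [heq]; exact h1
      · intro u hu
        rcases Finset.mem_union.1 (Finsupp.support_add (g₁ := _) hu) with h | h
        · exact h2 u h
        · rw [Finset.mem_singleton.1 (Finsupp.support_single_subset h)]; exact hirr
      · intro u hu
        rcases Finset.mem_union.1 (Finsupp.support_add (g₁ := _) hu) with h | h
        · exact le_of_lt (lt_of_le_of_lt (h3 u h) hlt)
        · rw [Finset.mem_singleton.1 (Finsupp.support_single_subset h), hm']
    · -- leading word reducible: subtract a multiple of a generator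
      simp only [IrrS, Set.mem_setOf_eq] at hirr
      push_neg at hirr
      obtain ⟨s, hs, w, a, b, hlead, hw₀eq⟩ := hirr
      obtain ⟨w', hlead', hcoef⟩ := hmonic s hs
      have hww : w = w' := le_antisymm (hlead'.2 w hlead.1) (hlead.2 w' hlead'.1)
      have hsw : s.coeff w = 1 := by rw [hww]; exact hcoef
      set g := MonoidAlgebra.single a (1:k) * s * MonoidAlgebra.single b 1 with hgdef
      have hgmem : g ∈ IdS k S := Submodule.subset_span
        ⟨s, hs, a, b, by simp [MonoidAlgebra.of_apply, hgdef]⟩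
      have hg₀ : g.coeff w₀ = 1 := by
        have hb : ∀ c : FreeMonoid X, c * b = a * w * b ↔ c = a * w := by
          intro c
          constructor
          · intro h
            refine hinj 1 b c (a * w) ?_
            simpa using h
          · rintro rfl; rfl
        have ha : ∀ c : FreeMonoid X, a * c = a * w ↔ c = w := by
          intro c
          constructor
          · intro h
            refine hinj a 1 c w ?_
            simpa using h
          · rintro rfl; rfl
        rw [hw₀eq, hgdef, MonoidAlgebra.coeff_mul_single_eq_coeff_mul _ (fun c _ => hb c),
          MonoidAlgebra.coeff_single_mul_eq_mul_coeff _ (fun c _ => ha c), hsw, one_mul, mul_one]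
      have hgsupp : ∀ u ∈ g.coeff.support, u ≤ w₀ := by
        intro u hu
        have h1 := MonoidAlgebra.support_coeff_mul_subset (MonoidAlgebra.single a (1:k) * s)
          (MonoidAlgebra.single b 1) hu
        rw [Finset.mem_mul] at h1
        obtain ⟨x, hx, y, hy, hxy⟩ := h1
        have h2 := MonoidAlgebra.support_coeff_mul_subset (MonoidAlgebra.single a (1:k)) s hx
        rw [Finset.mem_mul] at h2
        obtain ⟨p, hp, v, hv, hpv⟩ := h2
        have hpa : p = a := Finset.mem_singleton.1 (Finsupp.support_single_subset hp)
        have hyb : y = b := Finset.mem_singleton.1 (Finsupp.support_single_subset hy)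
        have hu' : u = a * v * b := by rw [← hxy, ← hpv, hpa, hyb]
        have hvw : v ≤ w := hlead.2 v hv
        rcases eq_or_lt_of_le hvw with rfl | hvw
        · rw [hu', hw₀eq]
        · rw [hu', hw₀eq]
          exact le_of_lt (hmono v w a b hvw)
      set f' := f - f.coeff w₀ • g with hf'def
      have hf'w₀ : f'.coeff w₀ = 0 := by
        rw [hf'def, MonoidAlgebra.coeff_sub, Finsupp.sub_apply, MonoidAlgebra.coeff_smul, Finsupp.smul_apply, hg₀, smul_eq_mul, mul_one, sub_self]
      have hfs' : ∀ u ∈ f'.coeff.support, u < w₀ := by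
        intro u hu
        have hune : u ≠ w₀ := by
          intro h; rw [h] at hu; exact (Finsupp.mem_support_iff.1 hu) hf'w₀
        rcases Finset.mem_union.1 (Finsupp.support_sub (f := f.coeff) hu) with h | h
        · exact lt_of_le_of_ne (hmax u h) hune
        · exact lt_of_le_of_ne (hgsupp u (Finsupp.support_smul h)) hune
      have hlt : f'.coeff.support.max < m := hm' ▸ maxlt f' w₀ hfs'
      obtain ⟨r, h1, h2, h3⟩ := ih _ hlt f' rfl
      refine ⟨r, ?_, h2, fun u hu => le_of_lt (lt_of_le_of_lt (h3 u hu) hlt)⟩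
      have heq : f - r = (f' - r) + f.coeff w₀ • g := by rw [hf'def]; abel
      rw [heq]
      exact Submodule.add_mem _ h1 (Submodule.smul_mem _ _ hgmem)
  -- elements of Id(S) supported on Irr(S) vanish
  have Z : ∀ r : MonoidAlgebra k (FreeMonoid X),
      (∀ u ∈ r.coeff.support, u ∈ IrrS S) → r ∈ IdS k S → r = 0 := by
    intro r hsupp hr
    set v : IrrS S → (MonoidAlgebra k (FreeMonoid X) ⧸ IdS k S) :=
      fun u => Submodule.Quotient.mk (p := IdS k S)
        (MonoidAlgebra.of k (FreeMonoid X) (u : FreeMonoid X)) with hvdef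
    set c : {u // u ∈ IrrS S} →₀ k := r.coeff.subtypeDomain (· ∈ IrrS S) with hcdef
    have hlc : Finsupp.linearCombination k v c = 0 := by
      rw [Finsupp.linearCombination_apply, hcdef]
      refine Eq.trans (Finsupp.sum_subtypeDomain_index
        (h := fun (u : FreeMonoid X) (a : k) => a • (Submodule.Quotient.mk (p := IdS k S)
          (MonoidAlgebra.of k (FreeMonoid X) u))) hsupp) ?_
      have h2 : (r.coeff.sum fun u a => a • (Submodule.Quotient.mk (p := IdS k S)
          (MonoidAlgebra.of k (FreeMonoid X) u)))
          = (IdS k S).mkQ (r.coeff.sum fun u a => MonoidAlgebra.single u a) := by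
        rw [map_finsuppSum]
        refine Finsupp.sum_congr ?_
        intro u _
        rw [← (IdS k S).mkQ_apply, ← map_smul]
        congr 1
        rw [MonoidAlgebra.of_apply, MonoidAlgebra.smul_single', mul_one]
      rw [h2, MonoidAlgebra.sum_coeff_single, Submodule.mkQ_apply, Submodule.Quotient.mk_eq_zero]
      exact hr
    have hc0 : c = 0 := linearIndependent_iff.1 hli c hlc
    ext u
    by_cases hu : u ∈ IrrS S
    · have := DFunLike.congr_fun hc0 ⟨u, hu⟩
      simpa [hcdef] using this
    · rw [Finsupp.notMem_support_iff.1 (fun h => hu (hsupp u h))]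
      rfl
  -- main argument
  intro f hf hf0
  by_contra hcon
  push_neg at hcon
  have hne : f.coeff.support.Nonempty := Finsupp.support_nonempty_iff.2 (mt MonoidAlgebra.coeff_eq_zero.1 hf0)
  set w₀ := f.coeff.support.max' hne with hw₀def
  have hleadf : IsLead f w₀ := ⟨f.coeff.support.max'_mem hne, fun u hu => f.coeff.support.le_max' u hu⟩
  have hirr : w₀ ∈ IrrS S := by
    intro s hs w a b hl heq
    exact hcon s hs w a b hl (heq ▸ hleadf)
  set f' := f - MonoidAlgebra.single w₀ (f.coeff w₀) with hf'def
  obtain ⟨r', h1, h2, h3⟩ := L f'.coeff.support.max f' rfl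
  have hf'w₀ : f'.coeff w₀ = 0 := by
    rw [hf'def, MonoidAlgebra.coeff_sub, Finsupp.sub_apply, MonoidAlgebra.coeff_single, Finsupp.single_eq_same, sub_self]
  have hfs' : ∀ u ∈ f'.coeff.support, u < w₀ := by
    intro u hu
    have hune : u ≠ w₀ := by
      intro h; rw [h] at hu; exact (Finsupp.mem_support_iff.1 hu) hf'w₀
    rcases Finset.mem_union.1 (Finsupp.support_sub (f := f.coeff) hu) with h | h
    · exact lt_of_le_of_ne (f.coeff.support.le_max' u h) hune
    · exact absurd (Finset.mem_singleton.1 (Finsupp.support_single_subset h)) hune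
  have hr'lt : ∀ u ∈ r'.coeff.support, u < w₀ := by
    intro u hu
    have := lt_of_le_of_lt (h3 u hu) (maxlt f' w₀ hfs')
    exact_mod_cast this
  have hr'w₀ : r'.coeff w₀ = 0 := by
    by_contra h
    exact absurd (hr'lt w₀ (Finsupp.mem_support_iff.2 h)) (lt_irrefl _)
  set r := r' + MonoidAlgebra.single w₀ (f.coeff w₀) with hrdef
  have hrmem : r ∈ IdS k S := by
    have heq : r = f - (f' - r') := by rw [hrdef, hf'def]; abel
    rw [heq]
    exact Submodule.sub_mem _ hf h1
  have hrsupp : ∀ u ∈ r.coeff.support, u ∈ IrrS S := by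
    intro u hu
    rcases Finset.mem_union.1 (Finsupp.support_add (g₁ := _) hu) with h | h
    · exact h2 u h
    · rw [Finset.mem_singleton.1 (Finsupp.support_single_subset h)]; exact hirr
  have hr0 : r = 0 := Z r hrsupp hrmem
  have : r.coeff w₀ = f.coeff w₀ := by
    rw [hrdef, MonoidAlgebra.coeff_add, Finsupp.add_apply, MonoidAlgebra.coeff_single, Finsupp.single_eq_same, hr'w₀, zero_add]
  rw [hr0] at this
  exact (Finsupp.mem_support_iff.1 hleadf.1) this.symm
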